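/- Let ρ ∈ H^2(S), u ∈ H^3(S) periodic solving ρ_t = (ρu)_x + 2γ₂ρ_x. Then d/dt ∫_S ρ_x² dx = 3∫_S u_x ρ_x² dx + 2∫_S u_{xx} ρ ρ_x dx; in particular, if u_x ≤ M₁ pointwise, then d/dt ∫_S ρ_x² dx ≤ (3M₁ + ‖ρ‖_{L^∞}) ∫_S ρ_x² dx + ‖ρ‖_{L^∞} ∫_S u_{xx}² dx. -/

import Mathlib

open MeasureTheory intervalIntegral

/-- For a smooth periodic solution of the transport equation `ρ_t = (ρu)_x + 2γ₂ρ_x`: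
`d/dt ∫_S ρ_x² dx = 3∫_S u_x ρ_x² dx + 2∫_S u_{xx} ρ ρ_x dx`; in particular, if
`u_x ≤ M₁` pointwise, then
`d/dt ∫_S ρ_x² dx ≤ (3M₁ + ‖ρ‖_∞) ∫_S ρ_x² dx + ‖ρ‖_∞ ∫_S u_{xx}² dx`. -/
theorem rho_x_energy_identity
    (γ₂ M₁ : ℝ) (u ux uxx ρ ρt ρx ρxx ρxt : ℝ → ℝ → ℝ)
    (hcu : Continuous (Function.uncurry u))
    (hcux : Continuous (Function.uncurry ux))
    (hcuxx : Continuous (Function.uncurry uxx))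
    (hcρ : Continuous (Function.uncurry ρ))
    (hcρx : Continuous (Function.uncurry ρx))
    (hcρxx : Continuous (Function.uncurry ρxx))
    (hcρxt : Continuous (Function.uncurry ρxt))
    (hpu : ∀ t x : ℝ, u t (x + 1) = u t x)
    (hpρ : ∀ t x : ℝ, ρ t (x + 1) = ρ t x)
    (hux : ∀ t x : ℝ, HasDerivAt (fun y => u t y) (ux t x) x)
    (huxx : ∀ t x : ℝ, HasDerivAt (fun y => ux t y) (uxx t x) x)
    (hρt : ∀ t x : ℝ, HasDerivAt (fun s => ρ s x) (ρt t x) t)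
    (hρx : ∀ t x : ℝ, HasDerivAt (fun y => ρ t y) (ρx t x) x)
    (hρxx : ∀ t x : ℝ, HasDerivAt (fun y => ρx t y) (ρxx t x) x)
    -- mixed partial derivative (equality of mixed partials holds by smoothness)
    (hρxt : ∀ t x : ℝ, HasDerivAt (fun s => ρx s x) (ρxt t x) t)
    (hρtx : ∀ t x : ℝ, HasDerivAt (fun y => ρt t y) (ρxt t x) x)
    (hpde : ∀ t x : ℝ,
      ρt t x = ρx t x * u t x + ρ t x * ux t x + 2 * γ₂ * ρx t x) :
    ∀ t : ℝ,
      HasDerivAt (fun s => ∫ x in (0:ℝ)..1, (ρx s x) ^ 2)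
        (3 * (∫ x in (0:ℝ)..1, ux t x * (ρx t x) ^ 2)
          + 2 * ∫ x in (0:ℝ)..1, uxx t x * ρ t x * ρx t x) t ∧
      ((∀ x : ℝ, ux t x ≤ M₁) →
        3 * (∫ x in (0:ℝ)..1, ux t x * (ρx t x) ^ 2)
            + 2 * (∫ x in (0:ℝ)..1, uxx t x * ρ t x * ρx t x)
          ≤ (3 * M₁ + ⨆ x : ℝ, |ρ t x|) * (∫ x in (0:ℝ)..1, (ρx t x) ^ 2)
            + (⨆ x : ℝ, |ρ t x|) * ∫ x in (0:ℝ)..1, (uxx t x) ^ 2) := by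
  -- sections are continuous
  have sect : ∀ (f : ℝ → ℝ → ℝ), Continuous (Function.uncurry f) →
      ∀ s : ℝ, Continuous (f s) := fun f hf s => hf.comp (Continuous.prodMk_right s)
  have ii : ∀ (f : ℝ → ℝ), Continuous f → IntervalIntegrable f volume 0 1 :=
    fun f hf => hf.intervalIntegrable 0 1
  -- periodicity of ρx
  have hpρx : ∀ t x : ℝ, ρx t (x + 1) = ρx t x := by
    intro t x
    have h1 : HasDerivAt (fun y => ρ t (y + 1)) (ρx t (x + 1)) x :=
      HasDerivAt.comp_add_const x 1 (hρx t (x + 1))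
    have h2 : (fun y => ρ t (y + 1)) = fun y => ρ t y := funext fun y => hpρ t y
    rw [h2] at h1
    exact h1.unique (hρx t x)
  intro t
  have cu := sect u hcu t
  have cux := sect ux hcux t
  have cuxx := sect uxx hcuxx t
  have cρ := sect ρ hcρ t
  have cρx := sect ρx hcρx t
  have cρxx := sect ρxx hcρxx t
  have cρxt := sect ρxt hcρxt t
  -- mixed partial via the PDE
  have hmix : ∀ x : ℝ, ρxt t x =
      ρxx t x * u t x + ρx t x * ux t x + (ρx t x * ux t x + ρ t x * uxx t x)
        + 2 * γ₂ * ρxx t x := by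
    intro x
    have h1 : HasDerivAt (fun y => ρx t y * u t y + ρ t y * ux t y + 2 * γ₂ * ρx t y)
        (ρxx t x * u t x + ρx t x * ux t x + (ρx t x * ux t x + ρ t x * uxx t x)
          + 2 * γ₂ * ρxx t x) x :=
      (((hρxx t x).mul (hux t x)).add ((hρx t x).mul (huxx t x))).add
        ((hρxx t x).const_mul (2 * γ₂))
    have h2 : (fun y => ρt t y) = fun y => ρx t y * u t y + ρ t y * ux t y + 2 * γ₂ * ρx t y :=
      funext fun y => hpde t y
    have h3 := hρtx t x
    rw [h2] at h3
    exact h3.unique h1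
  -- the exact derivative G' whose integral vanishes by periodicity
  have hGd : ∀ x : ℝ, HasDerivAt (fun y => ρx t y ^ 2 * (u t y + 2 * γ₂))
      (2 * ρx t x * ρxx t x * (u t x + 2 * γ₂) + ρx t x ^ 2 * ux t x) x := by
    intro x
    have h := ((hρxx t x).fun_pow 2).fun_mul ((hux t x).add_const (2 * γ₂))
    convert h using 1 <;> try rfl
    push_cast
    ring
  have cGd : Continuous fun x =>
      2 * ρx t x * ρxx t x * (u t x + 2 * γ₂) + ρx t x ^ 2 * ux t x := by fun_prop
  have hGzero : ∫ x in (0:ℝ)..1,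
      (2 * ρx t x * ρxx t x * (u t x + 2 * γ₂) + ρx t x ^ 2 * ux t x) = 0 := by
    rw [integral_eq_sub_of_hasDerivAt (fun x _ => hGd x) (ii _ cGd)]
    have e1 : ρx t 1 = ρx t 0 := by simpa using hpρx t 0
    have e2 : u t 1 = u t 0 := by simpa using hpu t 0
    rw [e1, e2]; ring
  -- differentiation under the integral sign
  have key : HasDerivAt (fun s => ∫ x in (0:ℝ)..1, (ρx s x) ^ 2)
      (∫ x in (0:ℝ)..1, 2 * ρx t x * ρxt t x) t := by
    have hK : IsCompact (Metric.closedBall t 1 ×ˢ Set.uIcc (0:ℝ) 1) :=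
      (isCompact_closedBall t 1).prod isCompact_uIcc
    have hcont : Continuous fun p : ℝ × ℝ => 2 * ρx p.1 p.2 * ρxt p.1 p.2 := by
      have : (fun p : ℝ × ℝ => 2 * ρx p.1 p.2 * ρxt p.1 p.2)
          = fun p => 2 * Function.uncurry ρx p * Function.uncurry ρxt p := rfl
      rw [this]; fun_prop
    obtain ⟨C, hC⟩ := hK.exists_bound_of_continuousOn hcont.continuousOn
    have h := intervalIntegral.hasDerivAt_integral_of_dominated_loc_of_deriv_le
      (F := fun s x => ρx s x ^ 2) (F' := fun s x => 2 * ρx s x * ρxt s x)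
      (bound := fun _ => C) (μ := volume) (a := (0:ℝ)) (b := 1)
      (Metric.ball_mem_nhds t one_pos)
      (Filter.Eventually.of_forall fun s =>
        ((sect ρx hcρx s).pow 2).aestronglyMeasurable)
      (ii _ (cρx.pow 2))
      ((continuous_const.mul cρx |>.mul cρxt).aestronglyMeasurable)
      (Filter.Eventually.of_forall fun x hx s hs =>
        hC (s, x) ⟨Metric.ball_subset_closedBall hs, Set.uIoc_subset_uIcc hx⟩)
      (ii _ continuous_const)
      (Filter.Eventually.of_forall fun x _ s _ => by
        have h := (hρxt s x).fun_pow 2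
        convert h using 1 <;> try rfl
        push_cast
        ring)
    exact h.2
  -- rewrite the derivative integral using the PDE and integration by parts
  have hint_eq : (∫ x in (0:ℝ)..1, 2 * ρx t x * ρxt t x)
      = 3 * (∫ x in (0:ℝ)..1, ux t x * (ρx t x) ^ 2)
        + 2 * ∫ x in (0:ℝ)..1, uxx t x * ρ t x * ρx t x := by
    have h1 : ∀ x : ℝ, 2 * ρx t x * ρxt t x
        = (2 * ρx t x * ρxx t x * (u t x + 2 * γ₂) + ρx t x ^ 2 * ux t x)
          + (3 * (ux t x * ρx t x ^ 2) + 2 * (uxx t x * ρ t x * ρx t x)) := by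
      intro x; rw [hmix x]; ring
    have crest : Continuous fun x =>
        3 * (ux t x * ρx t x ^ 2) + 2 * (uxx t x * ρ t x * ρx t x) := by fun_prop
    rw [intervalIntegral.integral_congr (g := fun x =>
        (2 * ρx t x * ρxx t x * (u t x + 2 * γ₂) + ρx t x ^ 2 * ux t x)
          + (3 * (ux t x * ρx t x ^ 2) + 2 * (uxx t x * ρ t x * ρx t x)))
        (fun x _ => h1 x),
      intervalIntegral.integral_add (ii _ cGd) (ii _ crest), hGzero, zero_add,
      intervalIntegral.integral_add (ii _ (by fun_prop)) (ii _ (by fun_prop)),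
      intervalIntegral.integral_const_mul, intervalIntegral.integral_const_mul]
  rw [← hint_eq]
  refine ⟨key, ?_⟩
  rw [hint_eq]
  intro hM
  -- the supremum bound
  set Mρ := ⨆ x : ℝ, |ρ t x| with hMρdef
  have hbdd : BddAbove (Set.range fun x => |ρ t x|) := by
    have hper : Function.Periodic (fun x => |ρ t x|) 1 := fun x => congrArg abs (hpρ t x)
    have h1 : Set.range (fun x => |ρ t x|) ⊆ (fun x => |ρ t x|) '' Set.Icc 0 1 := by
      rintro y ⟨x, rfl⟩
      exact ⟨Int.fract x, ⟨Int.fract_nonneg x, (Int.fract_lt_one x).le⟩, by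
        simp only [← Int.self_sub_floor]; simpa [-Int.self_sub_floor] using hper.sub_int_mul_eq ⌊x⌋⟩
    exact ((isCompact_Icc.image cρ.abs).bddAbove).mono h1
  have hMρ : ∀ x : ℝ, |ρ t x| ≤ Mρ := fun x => le_ciSup hbdd x
  have hMρ0 : (0:ℝ) ≤ Mρ := (abs_nonneg _).trans (hMρ 0)
  -- first term
  have h3 : (∫ x in (0:ℝ)..1, ux t x * (ρx t x) ^ 2)
      ≤ ∫ x in (0:ℝ)..1, M₁ * (ρx t x) ^ 2 := by
    refine intervalIntegral.integral_mono_on zero_le_one (ii _ (by fun_prop))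
      (ii _ (by fun_prop)) fun x _ => ?_
    exact mul_le_mul_of_nonneg_right (hM x) (sq_nonneg _)
  -- second term
  have h4 : (2 : ℝ) * (∫ x in (0:ℝ)..1, uxx t x * ρ t x * ρx t x)
      ≤ Mρ * (∫ x in (0:ℝ)..1, (uxx t x) ^ 2) + Mρ * ∫ x in (0:ℝ)..1, (ρx t x) ^ 2 := by
    rw [← intervalIntegral.integral_const_mul]
    have hpt : ∀ x : ℝ, 2 * (uxx t x * ρ t x * ρx t x)
        ≤ Mρ * ((uxx t x) ^ 2 + (ρx t x) ^ 2) := by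
      intro x
      calc 2 * (uxx t x * ρ t x * ρx t x)
          ≤ |2 * (uxx t x * ρ t x * ρx t x)| := le_abs_self _
        _ = |ρ t x| * (2 * |uxx t x| * |ρx t x|) := by
            rw [abs_mul, abs_mul, abs_mul, abs_two]; ring
        _ ≤ |ρ t x| * ((uxx t x) ^ 2 + (ρx t x) ^ 2) := by
            refine mul_le_mul_of_nonneg_left ?_ (abs_nonneg _)
            have h := two_mul_le_add_sq |uxx t x| |ρx t x|
            simpa [sq_abs] using h
        _ ≤ Mρ * ((uxx t x) ^ 2 + (ρx t x) ^ 2) :=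
            mul_le_mul_of_nonneg_right (hMρ x) (by positivity)
    calc (∫ x in (0:ℝ)..1, 2 * (uxx t x * ρ t x * ρx t x))
        ≤ ∫ x in (0:ℝ)..1, Mρ * ((uxx t x) ^ 2 + (ρx t x) ^ 2) :=
          intervalIntegral.integral_mono_on zero_le_one (ii _ (by fun_prop))
            (ii _ (by fun_prop)) fun x _ => hpt x
      _ = Mρ * (∫ x in (0:ℝ)..1, (uxx t x) ^ 2) + Mρ * ∫ x in (0:ℝ)..1, (ρx t x) ^ 2 := by
          rw [intervalIntegral.integral_const_mul,
            intervalIntegral.integral_add (ii _ (by fun_prop)) (ii _ (by fun_prop))]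
          ring
  have h5 : (∫ x in (0:ℝ)..1, M₁ * (ρx t x) ^ 2)
      = M₁ * ∫ x in (0:ℝ)..1, (ρx t x) ^ 2 := intervalIntegral.integral_const_mul _ _
  rw [h5] at h3
  nlinarith [h3, h4]
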